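/- Let G : [0,∞) → [0,∞) be concave, increasing, not identically 0, with G(0) = 0, satisfying G(x+y) ≤ G(x)+G(y), G(x+y)² ≥ G(x)² + G(y)², and G(x²) = G(x)² for all x, y ≥ 0. Let a, b, c > 0 be the sides of a Euclidean triangle with angle γ opposite c, so c² = a² + b² - 2ab cos γ. Then the numbers G(a), G(b), G(c) satisfy the strict triangle inequality and the angle γ̃ opposite G(c) in the Euclidean triangle with sides G(a), G(b), G(c) satisfies γ̃ > γ/2. -/

import Mathlib

-- concavity scaling: l * G v ≤ G (l*v) for l ∈ [0,1]
lemma aux_scale (G : ℝ → ℝ) (hconc : ConcaveOn ℝ (Set.Ici 0) G) (h0 : G 0 = 0) :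
    ∀ v, 0 ≤ v → ∀ l : ℝ, 0 ≤ l → l ≤ 1 → l * G v ≤ G (l * v) := by
  intro v hv l hl0 hl1
  have h := hconc.2 (Set.mem_Ici.2 hv) (Set.mem_Ici.2 (le_refl (0:ℝ))) hl0
    (by linarith : (0:ℝ) ≤ 1 - l) (by ring)
  simpa [smul_eq_mul, h0] using h

lemma aux_pos (G : ℝ → ℝ) (hconc : ConcaveOn ℝ (Set.Ici 0) G)
    (hmono : MonotoneOn G (Set.Ici 0))
    (hne : ∃ x ∈ Set.Ici (0 : ℝ), G x ≠ 0) (h0 : G 0 = 0)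
    (hGnonneg : ∀ x, 0 ≤ x → 0 ≤ G x) :
    ∀ x, 0 < x → 0 < G x := by
  obtain ⟨x₀, hx₀m, hx₀⟩ := hne
  have hx₀0 : (0:ℝ) ≤ x₀ := hx₀m
  have hx₀pos : 0 < x₀ := by
    rcases eq_or_lt_of_le hx₀0 with h | h
    · exfalso; apply hx₀; rw [← h, h0]
    · exact h
  have hGx₀ : 0 < G x₀ := lt_of_le_of_ne (hGnonneg _ hx₀0) (Ne.symm hx₀)
  intro x hx
  rcases le_or_gt x₀ x with h | h
  · exact lt_of_lt_of_le hGx₀ (hmono (Set.mem_Ici.2 hx₀0) (Set.mem_Ici.2 hx.le) h)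
  · have hl : x / x₀ ≤ 1 := by
      rw [div_le_one hx₀pos]; exact h.le
    have hl0 : 0 ≤ x / x₀ := by positivity
    have := aux_scale G hconc h0 x₀ hx₀0 (x/x₀) hl0 hl
    have hx' : x / x₀ * x₀ = x := by field_simp
    rw [hx'] at this
    have hp : 0 < x / x₀ * G x₀ := by positivity
    linarith

example : True := trivial

lemma aux_smono (G : ℝ → ℝ)
    (hGnonneg : ∀ x, 0 ≤ x → 0 ≤ G x)
    (hsup : ∀ x y, 0 ≤ x → 0 ≤ y → G x ^ 2 + G y ^ 2 ≤ G (x + y) ^ 2)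
    (hpos : ∀ x, 0 < x → 0 < G x) :
    ∀ u v, 0 ≤ u → u < v → G u < G v := by
  intro u v hu huv
  have h := hsup u (v - u) hu (by linarith)
  rw [show u + (v - u) = v by ring] at h
  have h2 : 0 < G (v - u) := hpos _ (by linarith)
  have h3 : G u ^ 2 < G v ^ 2 := by nlinarith
  nlinarith [hGnonneg u hu, hGnonneg v (by linarith : (0:ℝ) ≤ v)]

lemma aux_pow (G : ℝ → ℝ) (hsq : ∀ x, 0 ≤ x → G (x ^ 2) = G x ^ 2) :
    ∀ (k : ℕ) (w : ℝ), 0 ≤ w → G (w ^ (2 ^ k)) = G w ^ (2 ^ k) := by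
  intro k
  induction k with
  | zero => intro w hw; simp
  | succ n ih =>
    intro w hw
    have h1 : w ^ (2 ^ (n + 1)) = (w ^ (2 ^ n)) ^ 2 := by
      rw [← pow_mul, pow_succ]
    rw [h1, hsq _ (pow_nonneg hw _), ih w hw, ← pow_mul, ← pow_succ]

lemma aux_nmul (G : ℝ → ℝ)
    (hsup : ∀ x y, 0 ≤ x → 0 ≤ y → G x ^ 2 + G y ^ 2 ≤ G (x + y) ^ 2) :
    ∀ (n : ℕ) (w : ℝ), 0 ≤ w → (n : ℝ) * G w ^ 2 ≤ G ((n : ℝ) * w) ^ 2 := by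
  intro n
  induction n with
  | zero => intro w hw; simpa using sq_nonneg (G 0)
  | succ m ih =>
    intro w hw
    have h1 := hsup ((m : ℝ) * w) w (by positivity) hw
    have h2 := ih w hw
    push_cast
    calc ((m : ℝ) + 1) * G w ^ 2 = (m : ℝ) * G w ^ 2 + G w ^ 2 := by ring
    _ ≤ G ((m : ℝ) * w) ^ 2 + G w ^ 2 := by linarith
    _ ≤ G ((m : ℝ) * w + w) ^ 2 := h1
    _ = G (((m : ℝ) + 1) * w) ^ 2 := by ring_nf

lemma aux_phi (G : ℝ → ℝ)
    (hGnonneg : ∀ x, 0 ≤ x → 0 ≤ G x)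
    (hmono : MonotoneOn G (Set.Ici 0))
    (hsup : ∀ x y, 0 ≤ x → 0 ≤ y → G x ^ 2 + G y ^ 2 ≤ G (x + y) ^ 2)
    (hsq : ∀ x, 0 ≤ x → G (x ^ 2) = G x ^ 2)
    (hpos : ∀ x, 0 < x → 0 < G x) :
    ∀ u v : ℝ, 0 < u → u ≤ v → v * G u ^ 2 ≤ u * G v ^ 2 := by
  intro u v hu huv
  rcases eq_or_lt_of_le huv with rfl | hlt
  · exact le_refl _
  have hv : 0 < v := lt_trans hu hlt
  by_contra hcon
  push_neg at hcon
  -- hcon : u * G v ^ 2 < v * G u ^ 2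
  have hFu : 0 < G u ^ 2 := by have := hpos u hu; positivity
  have hFv : 0 < G v ^ 2 := by have := hpos v hv; positivity
  set β : ℝ := (u * G v ^ 2) / (v * G u ^ 2) with hβdef
  have hden : 0 < v * G u ^ 2 := by positivity
  have hβ0 : 0 ≤ β := by positivity
  have hβ1 : β < 1 := (div_lt_one hden).2 hcon
  set d : ℝ := u / v with hddef
  have hd0 : 0 ≤ d := by positivity
  have hd1 : d < 1 := (div_lt_one hv).2 hlt
  -- key estimate for every k
  have key : ∀ k : ℕ, 1 ≤ β ^ (2 ^ k) + d ^ (2 ^ k) := by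
    intro k
    set N := 2 ^ k with hN
    have hNpos : 0 < N := Nat.pow_pos (by norm_num)
    set ρ : ℝ := v / u with hρdef
    have hρ1 : 1 < ρ := (one_lt_div hu).2 hlt
    have hρ0 : (0:ℝ) < ρ := by linarith
    set n : ℕ := ⌊ρ ^ N⌋₊ with hn
    have hfl : (n : ℝ) ≤ ρ ^ N := Nat.floor_le (by positivity)
    have hfl2 : ρ ^ N - 1 ≤ (n : ℝ) := by
      have := Nat.lt_floor_add_one (ρ ^ N)
      linarith
    -- G (v^N)^2 ≥ n * G (u^N)^2
    have hle : (n : ℝ) * u ^ N ≤ v ^ N := by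
      have h1 : (n : ℝ) * u ^ N ≤ ρ ^ N * u ^ N := by
        apply mul_le_mul_of_nonneg_right hfl (by positivity)
      have h2 : ρ ^ N * u ^ N = v ^ N := by
        rw [← mul_pow]; congr 1; rw [hρdef]; field_simp
      linarith
    have hmono' : G ((n : ℝ) * u ^ N) ≤ G (v ^ N) := by
      apply hmono (Set.mem_Ici.2 (by positivity)) (Set.mem_Ici.2 (by positivity)) hle
    have hg1 : (n : ℝ) * G (u ^ N) ^ 2 ≤ G (v ^ N) ^ 2 := by
      calc (n : ℝ) * G (u ^ N) ^ 2 ≤ G ((n : ℝ) * u ^ N) ^ 2 :=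
            aux_nmul G hsup n (u ^ N) (by positivity)
      _ ≤ G (v ^ N) ^ 2 := by
          have h1 : 0 ≤ G ((n : ℝ) * u ^ N) := hGnonneg _ (by positivity)
          nlinarith
    have hu' : G (u ^ N) = G u ^ N := aux_pow G hsq k u hu.le
    have hv' : G (v ^ N) = G v ^ N := aux_pow G hsq k v hv.le
    rw [hu', hv'] at hg1
    -- hg1 : n * (G u)^N^2 ≤ (G v)^N^2 ; i.e. n * (Gu^2)^N ≤ (Gv^2)^N
    have hg2 : (ρ ^ N - 1) * (G u ^ 2) ^ N ≤ (G v ^ 2) ^ N := by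
      have e1 : (G u ^ N) ^ 2 = (G u ^ 2) ^ N := by rw [← pow_mul, ← pow_mul, Nat.mul_comm]
      have e2 : (G v ^ N) ^ 2 = (G v ^ 2) ^ N := by rw [← pow_mul, ← pow_mul, Nat.mul_comm]
      rw [e1, e2] at hg1
      have : (ρ ^ N - 1) * (G u ^ 2) ^ N ≤ (n : ℝ) * (G u ^ 2) ^ N := by
        apply mul_le_mul_of_nonneg_right hfl2 (by positivity)
      linarith
    -- divide: β^N ≥ 1 - d^N
    have hβN : β ^ N = (u ^ N * (G v ^ 2) ^ N) / (v ^ N * (G u ^ 2) ^ N) := by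
      rw [hβdef, div_pow, mul_pow, mul_pow]
    have hdN : d ^ N = u ^ N / v ^ N := by rw [hddef, div_pow]
    have hvN : (0:ℝ) < v ^ N := by positivity
    have huN : (0:ℝ) < u ^ N := by positivity
    have hFuN : (0:ℝ) < (G u ^ 2) ^ N := by positivity
    have hρN : ρ ^ N * u ^ N = v ^ N := by
      rw [← mul_pow]; congr 1; rw [hρdef]; field_simp
    have hkey2 : v ^ N * (G u ^ 2) ^ N - u ^ N * (G u ^ 2) ^ N ≤ u ^ N * (G v ^ 2) ^ N := by
      have h5 := mul_le_mul_of_nonneg_left hg2 huN.le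
      have h6 : u ^ N * ((ρ ^ N - 1) * (G u ^ 2) ^ N)
          = (ρ ^ N * u ^ N) * (G u ^ 2) ^ N - u ^ N * (G u ^ 2) ^ N := by ring
      rw [hρN] at h6
      linarith
    have goal2 : 1 - d ^ N ≤ β ^ N := by
      rw [hβN, hdN]
      have e2 : (1 : ℝ) - u ^ N / v ^ N = (v ^ N - u ^ N) / v ^ N := by field_simp
      rw [e2, div_le_div_iff₀ hvN (by positivity)]
      have h7 := mul_le_mul_of_nonneg_left hkey2 hvN.le
      nlinarith [h7]
    linarith
  -- now get contradiction
  obtain ⟨k1, hk1⟩ := exists_pow_lt_of_lt_one (show (0:ℝ) < 1/2 by norm_num) hβ1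
  obtain ⟨k2, hk2⟩ := exists_pow_lt_of_lt_one (show (0:ℝ) < 1/2 by norm_num) hd1
  set k := k1 + k2 with hk
  have h2k : k1 ≤ 2 ^ k ∧ k2 ≤ 2 ^ k := by
    constructor
    · exact le_trans (Nat.le_add_right _ _) (Nat.le_of_lt (Nat.lt_two_pow_self (n := k)))
    · exact le_trans (Nat.le_add_left _ _) (Nat.le_of_lt (Nat.lt_two_pow_self (n := k)))
  have hb : β ^ (2 ^ k) ≤ β ^ k1 := pow_le_pow_of_le_one hβ0 hβ1.le h2k.1
  have hd : d ^ (2 ^ k) ≤ d ^ k2 := pow_le_pow_of_le_one hd0 hd1.le h2k.2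
  have := key k
  linarith

lemma aux_psi (G : ℝ → ℝ) (hconc : ConcaveOn ℝ (Set.Ici 0) G) (h0 : G 0 = 0)
    (hGnonneg : ∀ x, 0 ≤ x → 0 ≤ G x) :
    ∀ u v : ℝ, 0 ≤ u → u ≤ v → u ^ 2 * G v ^ 2 ≤ v ^ 2 * G u ^ 2 := by
  intro u v hu huv
  rcases eq_or_lt_of_le (le_trans hu huv) with h | hv
  · have : u = 0 := le_antisymm (h ▸ huv) hu
    simp [this, ← h, h0]
  have hl0 : 0 ≤ u / v := by positivity
  have hl1 : u / v ≤ 1 := by rw [div_le_one hv]; exact huv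
  have h := aux_scale G hconc h0 v (by linarith) (u / v) hl0 hl1
  rw [show u / v * v = u by field_simp] at h
  have h2 : 0 ≤ u / v * G v := by
    have := hGnonneg v (by linarith); positivity
  have h3 : (u / v * G v) ^ 2 ≤ G u ^ 2 := by nlinarith
  have h4 : (u / v * G v) ^ 2 = u ^ 2 * G v ^ 2 / v ^ 2 := by
    field_simp
  rw [h4] at h3
  rw [div_le_iff₀ (by positivity)] at h3
  linarith [h3]

-- pure arithmetic: case c ≤ a
set_option maxHeartbeats 1600000 in
lemma caseB_arith (a b c s m P R Z : ℝ)
    (ha : 0 < a) (hb : 0 < b) (hc : 0 < c)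
    (hs : 0 < s) (hs1 : s < 1)
    (hm : m ^ 2 = a * b) (hm0 : 0 < m) (hma : m ≤ a) (hbm : b ≤ m)
    (hP : 0 < P) (hR : 0 < R) (hZ : 0 < Z)
    (hbPaR : b * P ≤ a * R) (hmRbP : m * R ≤ b * P)
    (hca : c ≤ a)
    (heq : a ^ 2 - c ^ 2 + b ^ 2 = 4 * a * b * s ^ 2 - 2 * a * b)
    (hz : c ^ 2 * P ^ 2 ≤ a ^ 2 * Z ^ 2) :
    P ^ 2 + R ^ 2 - Z ^ 2 < 2 * (P * R) * s := by
  have hK : 0 ≤ a ^ 2 - c ^ 2 := by nlinarith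
  have hE1 : a ^ 2 - c ^ 2 + b ^ 2 < 2 * a * b * s := by
    nlinarith [mul_pos (mul_pos ha hb) (show 0 < (1 - s) * (2 * s + 1) by nlinarith)]
  have hs2 : 1 / 2 < s ^ 2 := by nlinarith [mul_pos ha hb, mul_pos hb hb]
  have hs07 : 7 / 10 ≤ s := by nlinarith
  have hf07 : 0 < 7 / 5 * a * m + b ^ 2 - 24 / 25 * m ^ 2 := by nlinarith
  have hE2 : 0 < 2 * a * s * m - (a ^ 2 - c ^ 2) - a * b := by
    have heqb : b * (a ^ 2 - c ^ 2) = 4 * a * b ^ 2 * s ^ 2 - 2 * a * b ^ 2 - b ^ 3 := by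
      linear_combination b * heq
    have hm3 : a * b ^ 2 * s ^ 2 = b * m ^ 2 * s ^ 2 := by linear_combination (-b * s ^ 2) * hm
    have hm4 : a * b ^ 2 = b * m ^ 2 := by linear_combination (-b) * hm
    have hm5 : a * b * m = m ^ 3 := by linear_combination (-m) * hm
    have hm6 : a * b * m * s = m ^ 3 * s := by linear_combination (-m * s) * hm
    have H1 : 0 < b * ((1 - s) * (7 / 5 * a * m + b ^ 2 - 24 / 25 * m ^ 2)) :=
      mul_pos hb (mul_pos (by linarith) hf07)
    have H2 : 0 ≤ (s - 7 / 10) * ((m - b) ^ 2 * (2 * m + b)) :=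
      mul_nonneg (by linarith) (mul_nonneg (sq_nonneg _) (by linarith))
    have H3 : 0 ≤ b * m ^ 2 * ((s - 7 / 10) * (1 - s)) :=
      mul_nonneg (by positivity) (mul_nonneg (by linarith) (by linarith))
    have hfin : b * 0 < b * (2 * a * s * m - (a ^ 2 - c ^ 2) - a * b) := by
      linarith [H1, H2, H3, heqb, hm3, hm4, hm5, hm6]
    have := lt_of_mul_lt_mul_left hfin hb.le
    linarith
  have hW : 0 < c ^ 2 * P ^ 2 - a ^ 2 * P ^ 2 - a ^ 2 * R ^ 2 + 2 * a ^ 2 * s * P * R := by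
    rcases le_total ((a ^ 2 - c ^ 2) * (b * P + m * R)) (2 * a ^ 2 * s * b * R) with hbr | hbr
    · have hid : b ^ 2 * (c ^ 2 * P ^ 2 - a ^ 2 * P ^ 2 - a ^ 2 * R ^ 2 + 2 * a ^ 2 * s * P * R)
          = a * b * (2 * a * s * m - (a ^ 2 - c ^ 2) - a * b) * R ^ 2
            + (a ^ 2 - c ^ 2) * (a * b - m ^ 2) * R ^ 2
            + (b * P - m * R) * (2 * a ^ 2 * s * b * R - (a ^ 2 - c ^ 2) * (b * P + m * R)) := by
        ring
      have hz0 : (a ^ 2 - c ^ 2) * (a * b - m ^ 2) * R ^ 2 = 0 := by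
        have : a * b - m ^ 2 = 0 := by linarith
        rw [this]; ring
      have hpos1 : 0 < a * b * (2 * a * s * m - (a ^ 2 - c ^ 2) - a * b) * R ^ 2 := by
        have h1 : 0 < a * b * (2 * a * s * m - (a ^ 2 - c ^ 2) - a * b) :=
          mul_pos (mul_pos ha hb) hE2
        positivity
      have hpos3 : 0 ≤ (b * P - m * R) * (2 * a ^ 2 * s * b * R - (a ^ 2 - c ^ 2) * (b * P + m * R)) :=
        mul_nonneg (by linarith) (by linarith)
      have hfin : b ^ 2 * 0 < b ^ 2 * (c ^ 2 * P ^ 2 - a ^ 2 * P ^ 2 - a ^ 2 * R ^ 2 + 2 * a ^ 2 * s * P * R) := by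
        rw [hid]; linarith
      exact lt_of_mul_lt_mul_left hfin (sq_nonneg b)
    · have hid2 : b ^ 2 * (c ^ 2 * P ^ 2 - a ^ 2 * P ^ 2 - a ^ 2 * R ^ 2 + 2 * a ^ 2 * s * P * R)
          = a ^ 2 * (2 * a * b * s - (a ^ 2 - c ^ 2) - b ^ 2) * R ^ 2
            + (a * R - b * P) * ((a ^ 2 - c ^ 2) * (b * P + a * R) - 2 * a ^ 2 * s * b * R) := by
        ring
      have hpos1 : 0 < a ^ 2 * (2 * a * b * s - (a ^ 2 - c ^ 2) - b ^ 2) * R ^ 2 := by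
        have h1 : 0 < 2 * a * b * s - (a ^ 2 - c ^ 2) - b ^ 2 := by linarith
        have h2 : 0 < a ^ 2 * (2 * a * b * s - (a ^ 2 - c ^ 2) - b ^ 2) := by positivity
        positivity
      have hmid : (a ^ 2 - c ^ 2) * (b * P + m * R) ≤ (a ^ 2 - c ^ 2) * (b * P + a * R) := by
        apply mul_le_mul_of_nonneg_left _ hK
        nlinarith [mul_le_mul_of_nonneg_right hma hR.le]
      have hpos3 : 0 ≤ (a * R - b * P) * ((a ^ 2 - c ^ 2) * (b * P + a * R) - 2 * a ^ 2 * s * b * R) :=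
        mul_nonneg (by linarith) (by linarith)
      have hfin : b ^ 2 * 0 < b ^ 2 * (c ^ 2 * P ^ 2 - a ^ 2 * P ^ 2 - a ^ 2 * R ^ 2 + 2 * a ^ 2 * s * P * R) := by
        rw [hid2]; linarith
      exact lt_of_mul_lt_mul_left hfin (sq_nonneg b)
  have hlin : a ^ 2 * (P ^ 2 + R ^ 2 - 2 * (P * R) * s) < a ^ 2 * Z ^ 2 := by nlinarith [hW, hz]
  have := lt_of_mul_lt_mul_left hlin (sq_nonneg a)
  linarith

-- pure arithmetic: case a ≤ c
set_option maxHeartbeats 1600000 in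
lemma caseA_arith (a b c s m P R Z : ℝ)
    (ha : 0 < a) (hb : 0 < b) (hc : 0 < c)
    (hs : 0 < s)
    (hm0 : 0 < m)
    (hA1eq : c ^ 2 = (a + b - 2 * m * s) ^ 2 + 4 * m * s * (a + b - 2 * m * s))
    (hP : 0 < P) (hR : 0 < R) (hZ : 0 < Z)
    (hφba : a * R ^ 2 ≤ b * P ^ 2) (hmRbP : m * R ≤ b * P)
    (hac : a ≤ c)
    (hz : c * P ^ 2 ≤ a * Z ^ 2) :
    P ^ 2 + R ^ 2 - Z ^ 2 < 2 * (P * R) * s := by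
  have hA1 : a + b < c + 2 * m * s := by
    rcases le_or_gt (a + b) (2 * m * s) with h | h
    · linarith
    · nlinarith [mul_pos (mul_pos hm0 hs) (show 0 < a + b - 2 * m * s by linarith)]
  have h1 : (c - a) * (a * R ^ 2) ≤ (c - a) * (b * P ^ 2) :=
    mul_le_mul_of_nonneg_left hφba (by linarith)
  have h2 : 2 * a * s * m * R ^ 2 ≤ 2 * a * s * b * P * R := by
    nlinarith [mul_le_mul_of_nonneg_left hmRbP (show (0:ℝ) ≤ 2 * a * s * R by positivity)]
  have hcore : b * 0 < b * (c * P ^ 2 - a * P ^ 2 - a * R ^ 2 + 2 * a * s * P * R) := by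
    nlinarith [h1, h2, mul_pos (mul_pos ha (mul_pos hR hR)) (show 0 < c + 2 * m * s - a - b by linarith)]
  have hW := lt_of_mul_lt_mul_left hcore hb.le
  have hlin : a * (P ^ 2 + R ^ 2 - 2 * (P * R) * s) < a * Z ^ 2 := by nlinarith [hW, hz]
  have := lt_of_mul_lt_mul_left hlin ha.le
  linarith

set_option maxHeartbeats 1600000 in
lemma aux_key (G : ℝ → ℝ)
    (hGnonneg : ∀ x, 0 ≤ x → 0 ≤ G x)
    (hconc : ConcaveOn ℝ (Set.Ici 0) G)
    (hmono : MonotoneOn G (Set.Ici 0))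
    (hne : ∃ x ∈ Set.Ici (0 : ℝ), G x ≠ 0)
    (h0 : G 0 = 0)
    (hsup : ∀ x y, 0 ≤ x → 0 ≤ y → G x ^ 2 + G y ^ 2 ≤ G (x + y) ^ 2)
    (hsq : ∀ x, 0 ≤ x → G (x ^ 2) = G x ^ 2)
    (a b c γ : ℝ) (ha : 0 < a) (hb : 0 < b) (hc : 0 < c)
    (hab : b ≤ a)
    (hγ : γ ∈ Set.Ioo 0 Real.pi)
    (hlaw : c ^ 2 = a ^ 2 + b ^ 2 - 2 * a * b * Real.cos γ) :
    G a ^ 2 + G b ^ 2 - G c ^ 2 < 2 * (G a * G b) * Real.cos (γ / 2) := by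
  obtain ⟨hγ0, hγπ⟩ := hγ
  have hpos := aux_pos G hconc hmono hne h0 hGnonneg
  set s : ℝ := Real.cos (γ / 2) with hsdef
  set t : ℝ := Real.sin (γ / 2) with htdef
  have hπ := Real.pi_pos
  have ht : 0 < t := Real.sin_pos_of_pos_of_lt_pi (by linarith) (by linarith)
  have hs : 0 < s := Real.cos_pos_of_mem_Ioo ⟨by linarith, by linarith⟩
  have hst : s ^ 2 + t ^ 2 = 1 := by
    rw [hsdef, htdef]; rw [add_comm]; exact Real.sin_sq_add_cos_sq _
  have hs1 : s < 1 := by nlinarith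
  have hcosγ : Real.cos γ = 2 * s ^ 2 - 1 := by
    have h := Real.cos_two_mul (γ / 2)
    rw [show 2 * (γ / 2) = γ by ring] at h
    rw [h, hsdef]
  have hcc : c ^ 2 = (a - b) ^ 2 + 4 * a * b * t ^ 2 := by
    linear_combination hlaw - 2 * a * b * hcosγ - 4 * a * b * hst
  set P : ℝ := G a with hPdef
  set R : ℝ := G b with hRdef
  set Z : ℝ := G c with hZdef
  have hP : 0 < P := hpos a ha
  have hR : 0 < R := hpos b hb
  have hZ : 0 < Z := hpos c hc
  have hφba : a * R ^ 2 ≤ b * P ^ 2 := aux_phi G hGnonneg hmono hsup hsq hpos b a hb hab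
  have hψba : b ^ 2 * P ^ 2 ≤ a ^ 2 * R ^ 2 := aux_psi G hconc h0 hGnonneg b a hb.le hab
  have hbPaR : b * P ≤ a * R := by
    apply le_of_pow_le_pow_left₀ two_ne_zero (by positivity)
    calc (b * P) ^ 2 = b ^ 2 * P ^ 2 := by ring
    _ ≤ a ^ 2 * R ^ 2 := hψba
    _ = (a * R) ^ 2 := by ring
  set m : ℝ := Real.sqrt (a * b) with hmdef
  have hm : m ^ 2 = a * b := Real.sq_sqrt (by positivity)
  have hm0 : 0 < m := Real.sqrt_pos.2 (by positivity)
  have hma : m ≤ a := by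
    apply le_of_pow_le_pow_left₀ two_ne_zero ha.le
    nlinarith [hm]
  have hbm : b ≤ m := by
    apply le_of_pow_le_pow_left₀ two_ne_zero hm0.le
    nlinarith [hm]
  have hmRbP : m * R ≤ b * P := by
    apply le_of_pow_le_pow_left₀ two_ne_zero (by positivity)
    have h1 : b * (a * R ^ 2) ≤ b * (b * P ^ 2) := mul_le_mul_of_nonneg_left hφba hb.le
    calc (m * R) ^ 2 = m ^ 2 * R ^ 2 := by ring
    _ = a * b * R ^ 2 := by rw [hm]
    _ ≤ b ^ 2 * P ^ 2 := by linarith [h1]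
    _ = (b * P) ^ 2 := by ring
  rcases le_total c a with hca | hac
  · -- case B : c ≤ a
    have hz : c ^ 2 * P ^ 2 ≤ a ^ 2 * Z ^ 2 := aux_psi G hconc h0 hGnonneg c a hc.le hca
    have heq : a ^ 2 - c ^ 2 + b ^ 2 = 4 * a * b * s ^ 2 - 2 * a * b := by
      linear_combination -hcc - 4 * a * b * hst
    exact caseB_arith a b c s m P R Z ha hb hc hs hs1 hm hm0 hma hbm hP hR hZ hbPaR hmRbP hca heq hz
  · -- case A : a ≤ c
    have hz : c * P ^ 2 ≤ a * Z ^ 2 := aux_phi G hGnonneg hmono hsup hsq hpos a c ha hac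
    have hA1eq : c ^ 2 = (a + b - 2 * m * s) ^ 2 + 4 * m * s * (a + b - 2 * m * s) := by
      linear_combination hcc + 4 * s ^ 2 * hm + 4 * a * b * hst
    exact caseA_arith a b c s m P R Z ha hb hc hs hm0 hA1eq hP hR hZ hφba hmRbP hac hz

set_option maxHeartbeats 1600000 in
/-- Lemma 5.1: for admissible side distortion functions `G`, the transformed triangle
exists and its angle opposite `G(c)` satisfies `γ̃ > γ/2`. -/
theorem stmt_4 (G : ℝ → ℝ)
    (hGnonneg : ∀ x, 0 ≤ x → 0 ≤ G x)
    (hconc : ConcaveOn ℝ (Set.Ici 0) G)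
    (hmono : MonotoneOn G (Set.Ici 0))
    (hne : ∃ x ∈ Set.Ici (0 : ℝ), G x ≠ 0)
    (h0 : G 0 = 0)
    (hsub : ∀ x y, 0 ≤ x → 0 ≤ y → G (x + y) ≤ G x + G y)
    (hsup : ∀ x y, 0 ≤ x → 0 ≤ y → G x ^ 2 + G y ^ 2 ≤ G (x + y) ^ 2)
    (hsq : ∀ x, 0 ≤ x → G (x ^ 2) = G x ^ 2)
    (a b c γ : ℝ) (ha : 0 < a) (hb : 0 < b) (hc : 0 < c)
    (hγ : γ ∈ Set.Ioo 0 Real.pi)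
    (hlaw : c ^ 2 = a ^ 2 + b ^ 2 - 2 * a * b * Real.cos γ) :
    G c < G a + G b ∧ G a < G b + G c ∧ G b < G a + G c ∧
      γ / 2 < Real.arccos ((G a ^ 2 + G b ^ 2 - G c ^ 2) / (2 * G a * G b)) := by
  obtain ⟨hγ0, hγπ⟩ := hγ
  have hπ := Real.pi_pos
  have hpos := aux_pos G hconc hmono hne h0 hGnonneg
  have hsm := aux_smono G hGnonneg hsup hpos
  have ht : 0 < Real.sin (γ / 2) := Real.sin_pos_of_pos_of_lt_pi (by linarith) (by linarith)
  have hs : 0 < Real.cos (γ / 2) := Real.cos_pos_of_mem_Ioo ⟨by linarith, by linarith⟩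
  have hst : Real.cos (γ / 2) ^ 2 + Real.sin (γ / 2) ^ 2 = 1 := by
    rw [add_comm]; exact Real.sin_sq_add_cos_sq _
  have hs1 : Real.cos (γ / 2) < 1 := by nlinarith
  have hcosγ : Real.cos γ = 2 * Real.cos (γ / 2) ^ 2 - 1 := by
    have h := Real.cos_two_mul (γ / 2)
    rw [show 2 * (γ / 2) = γ by ring] at h
    exact h
  have hcos1 : Real.cos γ < 1 := by nlinarith
  have hcosm1 : -1 < Real.cos γ := by nlinarith
  have htri_c : c < a + b := by
    nlinarith [mul_pos (mul_pos ha hb) (show 0 < 1 + Real.cos γ by linarith), hc, ha, hb]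
  have htri_a : a < b + c := by
    nlinarith [mul_pos (mul_pos ha hb) (show 0 < 1 - Real.cos γ by linarith), hc, ha, hb]
  have htri_b : b < a + c := by
    nlinarith [mul_pos (mul_pos ha hb) (show 0 < 1 - Real.cos γ by linarith), hc, ha, hb]
  have h1 : G c < G a + G b :=
    lt_of_lt_of_le (hsm c (a + b) hc.le htri_c) (hsub a b ha.le hb.le)
  have h2 : G a < G b + G c :=
    lt_of_lt_of_le (hsm a (b + c) ha.le htri_a) (hsub b c hb.le hc.le)
  have h3 : G b < G a + G c :=
    lt_of_lt_of_le (hsm b (a + c) hb.le htri_b) (hsub a c ha.le hc.le)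
  refine ⟨h1, h2, h3, ?_⟩
  have hGa : 0 < G a := hpos a ha
  have hGb : 0 < G b := hpos b hb
  have hGc : 0 < G c := hpos c hc
  have hden : 0 < 2 * G a * G b := by positivity
  have hkey : G a ^ 2 + G b ^ 2 - G c ^ 2 < 2 * (G a * G b) * Real.cos (γ / 2) := by
    rcases le_total b a with hab | hba
    · exact aux_key G hGnonneg hconc hmono hne h0 hsup hsq a b c γ ha hb hc hab ⟨hγ0, hγπ⟩ hlaw
    · have hlaw' : c ^ 2 = b ^ 2 + a ^ 2 - 2 * b * a * Real.cos γ := by linear_combination hlaw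
      have hkey' := aux_key G hGnonneg hconc hmono hne h0 hsup hsq b a c γ hb ha hc hba ⟨hγ0, hγπ⟩ hlaw'
      linarith [hkey']
  set Q : ℝ := (G a ^ 2 + G b ^ 2 - G c ^ 2) / (2 * G a * G b) with hQdef
  have hQlt : Q < Real.cos (γ / 2) := by
    rw [hQdef, div_lt_iff₀ hden]; linarith [hkey]
  have hQgt : -1 ≤ Q := by
    rw [hQdef, le_div_iff₀ hden]; nlinarith [h1, hGa, hGb, hGc]
  have hQle : Q ≤ 1 := by
    rw [hQdef, div_le_iff₀ hden]
    nlinarith [mul_pos (show 0 < G c - (G a - G b) by linarith)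
      (show 0 < G c + (G a - G b) by linarith)]
  by_contra hcon
  push_neg at hcon
  have harc := Real.cos_arccos hQgt hQle
  have hmono2 := Real.cos_le_cos_of_nonneg_of_le_pi (Real.arccos_nonneg Q)
    (by linarith : γ / 2 ≤ Real.pi) hcon
  rw [harc] at hmono2
  linarith [hQlt]
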